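/- Let d ≥ 1, β ∈ (1/2, ∞), Q = (2β−1)d + 1, and let a > 0 and c > 0. Define H : ℝ × ℝ^d × ℝ^d → ℝ by H(s,y,w) = (−s)^{−a} if s < 0, |y| ≤ c(−s)^β and |w| ≤ c(−s)^{β−1}, and H(s,y,w) = 0 otherwise. Then H belongs to the weak Lebesgue space L^{Q/a,∞}(ℝ^{1+2d}), i.e. sup_{λ>0} λ · |{(s,y,w) : H(s,y,w) > λ}|^{a/Q} < ∞; indeed |{H > λ}| = C'·λ^{−Q/a} for all λ > 0, where C' depends only on d, β, c, a. -/

import Mathlib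

open MeasureTheory Real
open scoped ENNReal

noncomputable section

abbrev E (d : ℕ) := EuclideanSpace ℝ (Fin d)
abbrev Z (d : ℕ) := ℝ × E d × E d

/-- The kernel-shaped function `H(s,y,w) = (-s)^{-a}` on the region
`s < 0`, `|y| ≤ c(-s)^β`, `|w| ≤ c(-s)^{β-1}`, and `0` otherwise. -/
def Hfun (d : ℕ) (β a c : ℝ) : Z d → ℝ := fun z =>
  if z.1 < 0 ∧ ‖z.2.1‖ ≤ c * (-z.1) ^ β ∧ ‖z.2.2‖ ≤ c * (-z.1) ^ (β - 1)
  then (-z.1) ^ (-a) else 0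

/-- `H` belongs to the weak Lebesgue space `L^{Q/a,∞}`, with an exact formula
for the measure of its superlevel sets. -/
theorem Hfun_weak_Lp (d : ℕ) (hd : 1 ≤ d) (β a c : ℝ)
    (hβ : 1/2 < β) (ha : 0 < a) (hc : 0 < c) :
    (∃ C' : ℝ, 0 < C' ∧ ∀ l : ℝ, 0 < l →
      volume {z : Z d | l < Hfun d β a c z} =
        ENNReal.ofReal (C' * l ^ (-(((2*β-1)*(d:ℝ)+1)/a)))) ∧
    (⨆ (l : ℝ) (_ : 0 < l),
        ENNReal.ofReal l *
          (volume {z : Z d | l < Hfun d β a c z}) ^ (a/((2*β-1)*(d:ℝ)+1))) < ⊤ := by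
  have hd0 : (0:ℝ) < d := by exact_mod_cast Nat.lt_of_lt_of_le Nat.zero_lt_one hd
  set p : ℝ := (2*β-1)*(d:ℝ) with hpdef
  have hp : 0 < p := by
    have : 0 < 2*β-1 := by linarith
    positivity
  set Q : ℝ := (2*β-1)*(d:ℝ)+1 with hQdef
  have hQ : 0 < Q := by simp only [hQdef]; linarith
  have hQp : Q = p + 1 := rfl
  set κ : ℝ := Real.sqrt π ^ d / Real.Gamma ((d:ℝ)/2+1) with hκdef
  have hκ : 0 < κ := by
    apply div_pos (pow_pos (Real.sqrt_pos.2 Real.pi_pos) d)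
      (Real.Gamma_pos_of_pos (by positivity))
  set K : ℝ := c^d * c^d * κ * κ with hKdef
  have hK : 0 < K := by positivity
  set C' : ℝ := K / Q with hC'def
  have hC' : 0 < C' := div_pos hK hQ
  -- the key measure computation
  have key : ∀ l : ℝ, 0 < l →
      volume {z : Z d | l < Hfun d β a c z} = ENNReal.ofReal (C' * l ^ (-(Q/a))) := by
    intro l hl
    have : Nonempty (Fin d) := ⟨⟨0, hd⟩⟩
    set T : ℝ := l ^ (-(1/a)) with hTdef
    have hT : 0 < T := Real.rpow_pos_of_pos hl _
    have hTa : T ^ (-a) = l := by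
      rw [hTdef, ← Real.rpow_mul hl.le]
      rw [show -(1/a) * -a = 1 by field_simp]
      exact Real.rpow_one l
    -- description of the superlevel set
    have hset : {z : Z d | l < Hfun d β a c z} =
        {z : Z d | z.1 ∈ Set.Ioo (-T) 0 ∧ ‖z.2.1‖ ≤ c * (-z.1) ^ β ∧
          ‖z.2.2‖ ≤ c * (-z.1) ^ (β - 1)} := by
      ext z
      simp only [Hfun, Set.mem_setOf_eq, Set.mem_Ioo]
      by_cases hcond : z.1 < 0 ∧ ‖z.2.1‖ ≤ c * (-z.1) ^ β ∧ ‖z.2.2‖ ≤ c * (-z.1) ^ (β - 1)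
      · rw [if_pos hcond]
        obtain ⟨h1, h2, h3⟩ := hcond
        have ht : 0 < -z.1 := neg_pos.2 h1
        have hiff : l < (-z.1) ^ (-a) ↔ -z.1 < T := by
          rw [← hTa]
          exact Real.rpow_lt_rpow_iff_of_neg hT ht (neg_neg_of_pos ha)
        constructor
        · intro h
          exact ⟨⟨by linarith [hiff.1 h], h1⟩, h2, h3⟩
        · rintro ⟨⟨hz1, -⟩, -, -⟩
          exact hiff.2 (by linarith)
      · rw [if_neg hcond]
        constructor
        · intro h; exact absurd h (by linarith)
        · rintro ⟨⟨-, h1⟩, h2, h3⟩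
          exact absurd ⟨h1, h2, h3⟩ hcond
    rw [hset]
    -- measurability
    have hmeas : MeasurableSet {z : Z d | z.1 ∈ Set.Ioo (-T) 0 ∧
        ‖z.2.1‖ ≤ c * (-z.1) ^ β ∧ ‖z.2.2‖ ≤ c * (-z.1) ^ (β - 1)} := by
      apply MeasurableSet.inter
      · exact measurable_fst measurableSet_Ioo
      apply MeasurableSet.inter
      · exact measurableSet_le (f := fun z : Z d => ‖z.2.1‖)
          (g := fun z : Z d => c * (-z.1) ^ β) (by fun_prop) (by fun_prop)
      · exact measurableSet_le (f := fun z : Z d => ‖z.2.2‖)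
          (g := fun z : Z d => c * (-z.1) ^ (β - 1)) (by fun_prop) (by fun_prop)
    -- slice computation
    rw [Measure.volume_eq_prod, Measure.prod_apply hmeas]
    have hslice : ∀ s : ℝ, volume (Prod.mk s ⁻¹'
        {z : Z d | z.1 ∈ Set.Ioo (-T) 0 ∧ ‖z.2.1‖ ≤ c * (-z.1) ^ β ∧
          ‖z.2.2‖ ≤ c * (-z.1) ^ (β - 1)}) =
        Set.indicator (Set.Ioo (-T) 0)
          (fun s => ENNReal.ofReal (K * (-s) ^ p)) s := by
      intro s
      by_cases hs : s ∈ Set.Ioo (-T) 0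
      · have hprei : Prod.mk s ⁻¹'
            {z : Z d | z.1 ∈ Set.Ioo (-T) 0 ∧ ‖z.2.1‖ ≤ c * (-z.1) ^ β ∧
              ‖z.2.2‖ ≤ c * (-z.1) ^ (β - 1)} =
            Metric.closedBall (0 : E d) (c * (-s) ^ β) ×ˢ
              Metric.closedBall (0 : E d) (c * (-s) ^ (β - 1)) := by
          ext q
          simp only [Set.mem_preimage, Set.mem_setOf_eq, Set.mem_prod,
            Metric.mem_closedBall, dist_zero_right]
          exact ⟨fun h => ⟨h.2.1, h.2.2⟩, fun h => ⟨hs, h.1, h.2⟩⟩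
        have ht : 0 < -s := neg_pos.2 hs.2
        have hr1 : 0 ≤ c * (-s) ^ β := by positivity
        have hr2 : 0 ≤ c * (-s) ^ (β - 1) := by positivity
        rw [hprei, Set.indicator_of_mem hs, Measure.volume_eq_prod,
          Measure.prod_prod, EuclideanSpace.volume_closedBall, EuclideanSpace.volume_closedBall]
        simp only [Fintype.card_fin]
        rw [← ENNReal.ofReal_pow hr1, ← ENNReal.ofReal_pow hr2,
          ← ENNReal.ofReal_mul (by positivity), ← ENNReal.ofReal_mul (by positivity),
          ← ENNReal.ofReal_mul (by positivity)]
        congr 1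
        have e1 : (c * (-s) ^ β) ^ d = c ^ d * (-s) ^ (β * d) := by
          rw [mul_pow, ← Real.rpow_natCast ((-s) ^ β) d, ← Real.rpow_mul ht.le]
        have e2 : (c * (-s) ^ (β - 1)) ^ d = c ^ d * (-s) ^ ((β - 1) * d) := by
          rw [mul_pow, ← Real.rpow_natCast ((-s) ^ (β - 1)) d, ← Real.rpow_mul ht.le]
        rw [e1, e2, hKdef, hpdef]
        rw [show (2*β-1)*(d:ℝ) = β * d + (β - 1) * d by ring, Real.rpow_add ht]
        ring
      · have hprei : Prod.mk s ⁻¹'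
            {z : Z d | z.1 ∈ Set.Ioo (-T) 0 ∧ ‖z.2.1‖ ≤ c * (-z.1) ^ β ∧
              ‖z.2.2‖ ≤ c * (-z.1) ^ (β - 1)} = ∅ := by
          ext q
          simp only [Set.mem_preimage, Set.mem_setOf_eq, Set.mem_empty_iff_false, iff_false,
            not_and]
          exact fun h1 _ _ => hs h1
        rw [hprei, Set.indicator_of_notMem hs]
        simp
    simp_rw [hslice]
    rw [lintegral_indicator measurableSet_Ioo]
    -- continuity and integrability of the integrand
    have hcont : Continuous fun s : ℝ => K * (-s) ^ p := by
      apply continuous_const.mul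
      exact continuous_neg.rpow_const (fun x => Or.inr hp.le)
    have hint : IntegrableOn (fun s : ℝ => K * (-s) ^ p) (Set.Ioo (-T) 0) := by
      apply (hcont.integrableOn_Icc (a := -T) (b := 0)).mono_set Set.Ioo_subset_Icc_self
    rw [← MeasureTheory.ofReal_integral_eq_lintegral_ofReal hint]
    swap
    · filter_upwards [self_mem_ae_restrict (measurableSet_Ioo :
        MeasurableSet (Set.Ioo (-T) 0))] with s hs
      have : 0 < -s := neg_pos.2 hs.2
      positivity
    congr 1
    have hTle : -T ≤ (0:ℝ) := by linarith
    rw [← MeasureTheory.integral_Ioc_eq_integral_Ioo, ← intervalIntegral.integral_of_le hTle]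
    rw [intervalIntegral.integral_const_mul]
    have hcomp : (∫ s in (-T)..(0:ℝ), (-s) ^ p) = ∫ t in (0:ℝ)..T, t ^ p := by
      rw [intervalIntegral.integral_comp_neg fun t => t ^ p]
      norm_num
    rw [hcomp, integral_rpow (Or.inl (by linarith))]
    rw [Real.zero_rpow (by linarith), sub_zero]
    have hTQ : T ^ (p + 1) = l ^ (-(Q/a)) := by
      rw [hTdef, ← Real.rpow_mul hl.le, ← hQp]
      congr 1
      field_simp
    rw [hTQ, hC'def]
    ring
  refine ⟨⟨C', hC', key⟩, ?_⟩
  -- the weak norm bound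
  refine lt_of_le_of_lt (iSup₂_le fun l hl => ?_) (ENNReal.ofReal_lt_top (r := C' ^ (a/Q)))
  rw [key l hl]
  have hx : (0:ℝ) < C' * l ^ (-(Q/a)) := by positivity
  rw [ENNReal.ofReal_rpow_of_pos hx, ← ENNReal.ofReal_mul hl.le]
  apply ENNReal.ofReal_le_ofReal
  rw [Real.mul_rpow hC'.le (Real.rpow_pos_of_pos hl _).le, ← Real.rpow_mul hl.le]
  have : -(Q/a) * (a/Q) = -1 := by field_simp
  rw [this, Real.rpow_neg_one, mul_comm (C' ^ (a/Q)), ← mul_assoc,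
    mul_inv_cancel₀ hl.ne', one_mul]
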